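/- Let k ≥ 1 be an integer, let p be a prime not dividing k(k+1), and let b ≥ 1 be an integer. Then z_k(p^b) divides p^(b−1)·(p − e_p(k))/2. Moreover, if p ≡ 3 (mod 4), the Legendre symbol of k+1 modulo p equals 1, and the Legendre symbol of k modulo p equals −1, then z_k(p^b) divides p^(b−1)·(p+1)/4. -/

import Mathlib

/-- The Shallit sequence `U(k)`: `U₀ = 0`, `U₁ = 1`,
`U_{n+2} = (4k+2) U_{n+1} - U_n`. -/
def shallitU (k : ℕ) : ℕ → ℤ
  | 0 => 0
  | 1 => 1
  | n + 2 => (4 * (k : ℤ) + 2) * shallitU k (n + 1) - shallitU k n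

/-- `U₀(k), …, U_{n-1}(k)` are pairwise incongruent modulo `m`. -/
def Discriminates (k m n : ℕ) : Prop :=
  ∀ i j : ℕ, i < n → j < n → shallitU k i ≡ shallitU k j [ZMOD (m : ℤ)] → i = j

/-- The discriminator `D_k(n)`: the smallest positive integer `m` such that
`U₀(k), …, U_{n-1}(k)` are pairwise incongruent modulo `m`. -/
noncomputable def shallitD (k n : ℕ) : ℕ :=
  sInf {m : ℕ | 0 < m ∧ Discriminates k m n}

/-- The index of appearance `z_k(m)`: the smallest `n ≥ 1` with `m ∣ U_n(k)`. -/
noncomputable def shallitZ (k m : ℕ) : ℕ :=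
  sInf {n : ℕ | 0 < n ∧ (m : ℤ) ∣ shallitU k n}

/-- The incongruence index `ι_k(m)`: the largest `j` such that
`U₀(k), …, U_{j-1}(k)` are pairwise distinct modulo `m`. -/
noncomputable def shallitIota (k m : ℕ) : ℕ :=
  sSup {j : ℕ | Discriminates k m j}

/-- `P(N)`: positive integers all of whose prime divisors divide `N`. -/
def setP (N : ℕ) : Set ℕ :=
  {m | 0 < m ∧ ∀ p : ℕ, p.Prime → p ∣ m → p ∣ N}

/-- The set `A_k`. -/
def setA (k : ℕ) : Set ℕ :=
  {m | 0 < m ∧ Odd m ∧ (∀ p : ℕ, p.Prime → p ∣ m → p ∣ k) ∧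
    (k % 9 = 6 → ¬ (9 ∣ m))}

/-- The set `B_k`. -/
def setB (k : ℕ) : Set ℕ :=
  {m | 0 < m ∧ Even m ∧ (∀ p : ℕ, p.Prime → p ∣ m → p ∣ k * (k + 1)) ∧
    ((k % 9 = 2 ∨ k % 9 = 6) → ¬ (9 ∣ m))}

/-- The set `S_{k,n} = {m ∈ A_k ∪ B_k : m ≥ n}`. -/
def setS (k n : ℕ) : Set ℕ :=
  {m | m ∈ setA k ∪ setB k ∧ n ≤ m}

/-- The set `A_{5,k} = {a·5^b : a ∈ A_k, b ≥ 1}`. -/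
def setA5 (k : ℕ) : Set ℕ :=
  {m | ∃ a b : ℕ, a ∈ setA k ∧ 1 ≤ b ∧ m = a * 5 ^ b}

/-- The set `B_{5,k} = {a·5^b : a ∈ B_k, b ≥ 1}`. -/
def setB5 (k : ℕ) : Set ℕ :=
  {m | ∃ a b : ℕ, a ∈ setB k ∧ 1 ≤ b ∧ m = a * 5 ^ b}

open Polynomial

namespace Stmt10Aux

noncomputable def spoly (k N : ℕ) : Polynomial (ZMod N) :=
  X ^ 2 - C ((4 * k + 2 : ℕ) : ZMod N) * X + 1

lemma spoly_monic (k N : ℕ) : (spoly k N).Monic := by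
  unfold spoly; monicity!

lemma spoly_natDegree (k N : ℕ) (hN : 1 < N) : (spoly k N).natDegree = 2 := by
  haveI : Fact (1 < N) := ⟨hN⟩
  unfold spoly; compute_degree!

lemma pow_formula {R : Type} [CommRing R] (k : ℕ) (x : R)
    (hx : x ^ 2 = ((4 * k + 2 : ℕ) : R) * x - 1) :
    ∀ n : ℕ, x ^ (n + 1) = ((shallitU k (n+1) : ℤ) : R) * x - ((shallitU k n : ℤ) : R)
  | 0 => by simp [shallitU]
  | (n+1) => by
      have ih := pow_formula k x hx n
      have h2 : shallitU k (n+2) = (4*(k:ℤ)+2) * shallitU k (n+1) - shallitU k n := rfl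
      calc x ^ (n+2) = x^(n+1) * x := by ring
      _ = (((shallitU k (n+1) : ℤ) : R) * x - ((shallitU k n : ℤ) : R)) * x := by rw [ih]
      _ = ((shallitU k (n+1) : ℤ) : R) * x^2 - ((shallitU k n : ℤ) : R) * x := by ring
      _ = _ := by rw [hx, h2]; push_cast; ring

section Main

variable (k N : ℕ)

noncomputable abbrev Aring := AdjoinRoot (spoly k N)

noncomputable abbrev aroot : Aring k N := AdjoinRoot.root (spoly k N)

lemma root_relation :
    (aroot k N) ^ 2 = ((4 * k + 2 : ℕ) : Aring k N) * aroot k N - 1 := by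
  have h : AdjoinRoot.mk (spoly k N) (X ^ 2 - C ((4 * k + 2 : ℕ) : ZMod N) * X + 1) = 0 :=
    AdjoinRoot.mk_self (f := spoly k N)
  rw [map_add, map_sub, map_pow, map_mul, AdjoinRoot.mk_X, AdjoinRoot.mk_C, map_one] at h
  have : (AdjoinRoot.of (spoly k N)) ((4 * k + 2 : ℕ) : ZMod N)
      = ((4 * k + 2 : ℕ) : Aring k N) := map_natCast _ _
  rw [this] at h
  linear_combination h

lemma coeff_eq_zero (hN : 1 < N) (a b : ZMod N)
    (h : (AdjoinRoot.of (spoly k N)) a + (AdjoinRoot.of (spoly k N)) b * aroot k N = 0) :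
    a = 0 ∧ b = 0 := by
  have hf := spoly_monic k N
  have hd := spoly_natDegree k N hN
  have hmk : AdjoinRoot.mk (spoly k N) (C a + C b * X) = 0 := by
    rw [map_add, map_mul, AdjoinRoot.mk_C, AdjoinRoot.mk_C, AdjoinRoot.mk_X]
    exact h
  rw [← map_zero (AdjoinRoot.mk (spoly k N)), AdjoinRoot.mk_eq_mk, sub_zero] at hmk
  obtain ⟨q, hq⟩ := hmk
  have hq0 : q = 0 := by
    by_contra hq0
    have h1 : (C a + C b * X).natDegree ≤ 1 := by
      refine le_trans (natDegree_add_le _ _) ?_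
      refine max_le (by simp) (le_trans natDegree_mul_le ?_)
      simp [natDegree_X_le]
    have h2 := hf.natDegree_mul' hq0
    rw [← hq, hd] at h2
    omega
  rw [hq0, mul_zero] at hq
  have ha : a = (C a + C b * X).coeff 0 := by simp
  have hb : b = (C a + C b * X).coeff 1 := by simp
  rw [hq] at ha hb
  simp at ha hb
  exact ⟨ha, hb⟩

lemma int_coeff_dvd (hN : 1 < N) (m₁ m₂ : ℤ)
    (h : (m₁ : Aring k N) + (m₂ : Aring k N) * aroot k N = 0) :
    (N : ℤ) ∣ m₁ ∧ (N : ℤ) ∣ m₂ := by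
  have h' : (AdjoinRoot.of (spoly k N)) ((m₁ : ZMod N))
      + (AdjoinRoot.of (spoly k N)) ((m₂ : ZMod N)) * aroot k N = 0 := by
    rw [map_intCast, map_intCast]; exact h
  obtain ⟨ha, hb⟩ := coeff_eq_zero k N hN _ _ h'
  constructor <;> rw [← ZMod.intCast_zmod_eq_zero_iff_dvd] <;> assumption

lemma intCast_eq_zero_iff (hN : 1 < N) (m : ℤ) :
    (m : Aring k N) = 0 ↔ (N : ℤ) ∣ m := by
  constructor
  · intro h
    exact (int_coeff_dvd k N hN m 0 (by push_cast; simpa using h)).1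
  · rintro ⟨t, rfl⟩
    push_cast
    have : ((N : ℕ) : Aring k N) = 0 := by
      rw [← map_natCast (AdjoinRoot.of (spoly k N)), ZMod.natCast_self, map_zero]
    rw [this, zero_mul]

end Main





section Main2
variable (k N : ℕ)

noncomputable abbrev broot : Aring k N := ((4 * k + 2 : ℕ) : Aring k N) - aroot k N

lemma conj_relation : (broot k N) ^ 2 = ((4 * k + 2 : ℕ) : Aring k N) * broot k N - 1 := by
  have h := root_relation k N
  unfold broot
  linear_combination h

lemma mul_conj : aroot k N * broot k N = 1 := by
  have h := root_relation k N
  unfold broot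
  linear_combination -h

lemma root_isUnit : IsUnit (aroot k N) :=
  IsUnit.of_mul_eq_one _ (mul_conj k N)

lemma delta_sq : (aroot k N - broot k N)^2 = ((16 * k * (k+1) : ℕ) : Aring k N) := by
  have h := root_relation k N
  unfold broot
  push_cast at h ⊢
  linear_combination (4 : Aring k N) * h

lemma delta_isUnit (hu : IsUnit ((16 * k * (k+1) : ℕ) : ZMod N)) :
    IsUnit (aroot k N - broot k N) := by
  have h1 : IsUnit ((16 * k * (k+1) : ℕ) : Aring k N) := by
    rw [← map_natCast (AdjoinRoot.of (spoly k N))]; exact hu.map _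
  rw [← delta_sq, sq] at h1
  exact isUnit_of_mul_isUnit_left h1

lemma dvd_iff_pow (hN : 1 < N) (hu : IsUnit ((16*k*(k+1) : ℕ) : ZMod N)) (n : ℕ) :
    (N:ℤ) ∣ shallitU k n ↔ (aroot k N)^(2*n) = 1 := by
  cases n with
  | zero => simp [shallitU]
  | succ j =>
    have hα := pow_formula k (aroot k N) (root_relation k N) j
    have hβ := pow_formula k (broot k N) (conj_relation k N) j
    have hαu : IsUnit ((aroot k N)^(j+1)) := (root_isUnit k N).pow _
    have h2j : 2 * (j+1) = (j+1) + (j+1) := by ring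
    constructor
    · intro hdvd
      have h0 : ((shallitU k (j+1) : ℤ) : Aring k N) = 0 :=
        (intCast_eq_zero_iff k N hN _).mpr hdvd
      have heq : (aroot k N)^(j+1) = (broot k N)^(j+1) := by
        rw [hα, hβ, h0]; ring
      have hab : (aroot k N)^(j+1) * (broot k N)^(j+1) = 1 := by
        rw [← mul_pow, mul_conj, one_pow]
      rw [h2j, pow_add]
      nth_rewrite 2 [heq]
      exact hab
    · intro hpow
      rw [h2j, pow_add] at hpow
      have h1 : (aroot k N)^(j+1) * (aroot k N)^(j+1)
          = (aroot k N)^(j+1) * (broot k N)^(j+1) := by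
        rw [hpow, ← mul_pow, mul_conj, one_pow]
      have heq := hαu.mul_left_cancel h1
      rw [hα, hβ] at heq
      have h2 : ((shallitU k (j+1) : ℤ) : Aring k N) * (aroot k N - broot k N) = 0 := by
        linear_combination heq
      obtain ⟨v, hv⟩ := (delta_isUnit k N hu).exists_right_inv
      have h3 : ((shallitU k (j+1) : ℤ) : Aring k N) = 0 := by
        calc ((shallitU k (j+1) : ℤ) : Aring k N)
            = ((shallitU k (j+1) : ℤ) : Aring k N) * ((aroot k N - broot k N) * v) := by
              rw [hv, mul_one]
          _ = (((shallitU k (j+1) : ℤ) : Aring k N) * (aroot k N - broot k N)) * v := by ring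
          _ = 0 := by rw [h2, zero_mul]
      exact (intCast_eq_zero_iff k N hN _).mp h3
end Main2





lemma finite_Aring (k N : ℕ) [NeZero N] : Finite (Aring k N) := by
  have b := AdjoinRoot.powerBasisAux' (spoly_monic k N)
  exact Finite.of_equiv _ b.equivFun.toEquiv.symm

lemma sInf_dvd (d : ℕ) (n : ℕ) (hn : 0 < n) (hdn : d ∣ 2*n) :
    sInf {m : ℕ | 0 < m ∧ d ∣ 2*m} ∣ n := by
  set S := {m : ℕ | 0 < m ∧ d ∣ 2*m} with hS
  have hne : S.Nonempty := ⟨n, hn, hdn⟩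
  have hz : sInf S ∈ S := Nat.sInf_mem hne
  set z := sInf S with hzdef
  have hmod : d ∣ 2 * (n % z) := by
    have hdm := Nat.div_add_mod n z
    have h1 : d ∣ 2*z*(n/z) := hz.2.mul_right _
    have e1 : 2*z*(n/z) = 2*(z*(n/z)) := by ring
    have h2 : 2*(n%z) = 2*n - 2*z*(n/z) := by omega
    rw [h2]
    exact Nat.dvd_sub hdn h1
  by_cases h0 : n % z = 0
  · exact Nat.dvd_of_mod_eq_zero h0
  · exfalso
    have hmem : n % z ∈ S := ⟨Nat.pos_of_ne_zero h0, hmod⟩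
    have hle := Nat.sInf_le hmem
    have hlt : n % z < z := Nat.mod_lt _ hz.1
    omega

lemma lift_pow {R : Type} [CommRing R] (p : ℕ) (hp : p.Prime) (x : R)
    (h : ((p:ℕ) : R) ∣ x - 1) :
    ∀ j : ℕ, ((p^(j+1) : ℕ) : R) ∣ x^(p^j) - 1
  | 0 => by simpa using h
  | (j+1) => by
      obtain ⟨w, hw⟩ := lift_pow p hp x h j
      have hx : x^(p^j) = ((p^(j+1):ℕ):R) * w + 1 := by linear_combination hw
      have hxp : x^(p^(j+1)) = (((p^(j+1):ℕ):R) * w + 1)^p := by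
        rw [← hx, ← pow_mul, pow_succ]
      have hsum : x ^ (p^(j+1)) - 1
          = ∑ i ∈ Finset.range p, (((p^(j+1):ℕ):R)*w)^(i+1) * ↑(p.choose (i+1)) := by
        rw [hxp, add_pow]
        simp only [one_pow, mul_one]
        rw [Finset.sum_range_succ']
        simp
      rw [hsum]
      refine Finset.dvd_sum ?_
      intro i _
      have hnat : (p^(j+1+1)) ∣ (p^(j+1))^(i+1) * p.choose (i+1) := by
        rcases Nat.eq_zero_or_pos i with rfl | hipos
        · simp [Nat.choose_one_right, pow_succ]
        · refine Dvd.dvd.mul_right ?_ _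
          rw [← pow_mul]
          exact pow_dvd_pow p (by nlinarith)
      obtain ⟨c, hc⟩ := hnat
      refine ⟨(c:R) * w^(i+1), ?_⟩
      have hcc := congrArg (fun m : ℕ => ((m : R) * w^(i+1))) hc
      push_cast at hcc ⊢
      rw [mul_pow]
      linear_combination hcc






variable (k p : ℕ) [hpf : Fact p.Prime]

lemma charP_Aring : CharP (Aring k p) p := by
  have hinj : Function.Injective (algebraMap (ZMod p) (Aring k p)) := by
    rw [injective_iff_map_eq_zero]
    intro a ha
    rw [AdjoinRoot.algebraMap_eq] at ha
    exact (coeff_eq_zero k p hpf.out.one_lt a 0 (by simp [ha])).1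
  exact charP_of_injective_algebraMap hinj p

lemma two_isUnit (hp2 : p ≠ 2) : IsUnit (2 : Aring k p) := by
  have h : (2 : ZMod p) ≠ 0 := by
    have : ((2:ℕ) : ZMod p) ≠ 0 := by
      rw [Ne, ZMod.natCast_eq_zero_iff]
      intro h
      exact hp2 ((Nat.prime_dvd_prime_iff_eq hpf.out Nat.prime_two).mp h)
    simpa using this
  have : IsUnit (2 : ZMod p) := isUnit_iff_ne_zero.mpr h
  have := this.map (algebraMap (ZMod p) (Aring k p))
  rwa [map_ofNat] at this

-- Frobenius computation for δ = 2α - c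
lemma delta_pow_card (hp2 : p ≠ 2) :
    (2*aroot k p - ((4*k+2:ℕ) : Aring k p))^p
      = ((legendreSym p ((k:ℤ)*((k:ℤ)+1)) : ℤ) : Aring k p)
        * (2*aroot k p - ((4*k+2:ℕ) : Aring k p)) := by
  haveI := charP_Aring k p
  set α := aroot k p with hα
  set c : Aring k p := ((4*k+2:ℕ) : Aring k p) with hc
  set δ : Aring k p := 2*α - c with hδ
  have hodd : Odd p := hpf.out.odd_of_ne_two hp2
  have hps : 2*(p/2)+1 = p := by
    obtain ⟨m, hm⟩ := hodd; omega
  -- δ^p = δ * (δ^2)^(p/2)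
  have h1 : δ^p = (δ^2)^(p/2) * δ := by
    rw [← pow_mul, ← pow_succ, hps]
  have hδ2 : δ^2 = ((16*k*(k+1) : ℕ) : Aring k p) := by
    have := delta_sq k p
    unfold broot at this
    rw [hδ, hc]
    linear_combination this
  -- Euler's criterion
  have hmap : ((16*k*(k+1) : ℕ) : Aring k p)
      = algebraMap (ZMod p) (Aring k p) (((16*k*(k+1) : ℕ) : ℤ) : ZMod p) := by
    rw [show (((16*k*(k+1):ℕ):ℤ) : ZMod p) = ((16*k*(k+1):ℕ) : ZMod p) by push_cast; ring,
      map_natCast]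
  have heuler : (δ^2)^(p/2)
      = ((legendreSym p (((16*k*(k+1):ℕ) : ℤ)) : ℤ) : Aring k p) := by
    rw [hδ2, hmap, ← map_pow, ← legendreSym.eq_pow]
    rw [map_intCast]
  have hleg : legendreSym p (((16*k*(k+1):ℕ) : ℤ)) = legendreSym p ((k:ℤ)*((k:ℤ)+1)) := by
    have h4 : ((16*k*(k+1):ℕ) : ℤ) = (4:ℤ)^2 * ((k:ℤ)*((k:ℤ)+1)) := by push_cast; ring
    have h4ne : ((4:ℤ) : ZMod p) ≠ 0 := by
      intro h
      rw [ZMod.intCast_zmod_eq_zero_iff_dvd] at h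
      have h' : p ∣ 4 := by exact_mod_cast h
      have hd2 : p ∣ 2 := hpf.out.dvd_of_dvd_pow (show p ∣ 2^2 by norm_num [h'])
      exact hp2 ((Nat.prime_dvd_prime_iff_eq hpf.out Nat.prime_two).mp hd2)
    rw [h4, legendreSym.mul, legendreSym.sq_one' p h4ne, one_mul]
  rw [h1, heuler, hleg, mul_comm]

lemma delta_pow_card_eq (hp2 : p ≠ 2) :
    (2*aroot k p - ((4*k+2:ℕ) : Aring k p))^p
      = 2*(aroot k p)^p - ((4*k+2:ℕ) : Aring k p) := by
  haveI := charP_Aring k p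
  have hodd : Odd p := hpf.out.odd_of_ne_two hp2
  have h1 : (2*aroot k p - ((4*k+2:ℕ):Aring k p))^p
      = (2*aroot k p)^p + (-((4*k+2:ℕ):Aring k p))^p := by
    rw [sub_eq_add_neg, add_pow_char]
  rw [h1, mul_pow, hodd.neg_pow]
  have h2 : (2 : Aring k p)^p = 2 := by
    have h' : ((2:ℕ) : Aring k p)^p = ((2:ℕ) : Aring k p) := by
      rw [(map_natCast (algebraMap (ZMod p) (Aring k p)) 2).symm, ← map_pow, ZMod.pow_card]
    simpa using h'
  have hc : ((4*k+2:ℕ) : Aring k p)^p = ((4*k+2:ℕ) : Aring k p) := by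
    rw [(map_natCast (algebraMap (ZMod p) (Aring k p)) _).symm, ← map_pow, ZMod.pow_card]
  rw [h2, hc]; ring

lemma root_pow_cases (hp2 : p ≠ 2) :
    (legendreSym p ((k:ℤ)*((k:ℤ)+1)) = 1 → (aroot k p)^(p-1) = 1)
    ∧ (legendreSym p ((k:ℤ)*((k:ℤ)+1)) = -1 → (aroot k p)^(p+1) = 1) := by
  have hd1 := delta_pow_card k p hp2
  have hd2 := delta_pow_card_eq k p hp2
  have h2u := two_isUnit k p hp2
  have hαu := root_isUnit k p
  constructor
  · intro he
    rw [he] at hd1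
    rw [show ((1:ℤ) : Aring k p) = 1 by push_cast; ring, one_mul] at hd1
    have h3 : 2*(aroot k p)^p = 2*(aroot k p) := by linear_combination hd2.symm + hd1
    have h4 : (aroot k p)^p = aroot k p := h2u.mul_left_cancel h3
    have h5 : (aroot k p)^(p-1) * aroot k p = 1 * aroot k p := by
      rw [one_mul, ← pow_succ, show p - 1 + 1 = p by have := hpf.out.pos; omega, h4]
    exact hαu.mul_right_cancel h5
  · intro he
    rw [he] at hd1
    rw [show ((-1:ℤ) : Aring k p) = -1 by push_cast; ring] at hd1
    have h3 : 2*(aroot k p)^p = 2*(broot k p) := by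
      unfold broot; linear_combination hd2.symm + hd1
    have h4 : (aroot k p)^p = broot k p := h2u.mul_left_cancel h3
    rw [pow_succ, h4, mul_comm, mul_conj]

lemma root_pow_half (hp2 : p ≠ 2)
    (hk1 : ((k+1:ℕ) : ZMod p) ≠ 0) (hk0 : ((k:ℕ) : ZMod p) ≠ 0)
    (hleg1 : legendreSym p ((k:ℤ)+1) = 1) (hlegk : legendreSym p (k:ℤ) = -1) :
    (aroot k p)^((p+1)/2) = 1 := by
  haveI := charP_Aring k p
  have hodd : Odd p := hpf.out.odd_of_ne_two hp2
  have h2u := two_isUnit k p hp2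
  set ι := algebraMap (ZMod p) (Aring k p) with hι
  set α := aroot k p with hαdef
  set δ : Aring k p := 2*α - ((4*k+2:ℕ) : Aring k p) with hδdef
  have he : legendreSym p ((k:ℤ)*((k:ℤ)+1)) = -1 := by
    rw [legendreSym.mul, hlegk, hleg1]; ring
  have hδp : δ^p = -δ := by
    have h := delta_pow_card k p hp2
    rw [he] at h
    rw [hδdef]
    rw [show ((-1:ℤ) : Aring k p) = -1 by push_cast; ring] at h
    linear_combination h
  -- square root s of k+1 in ZMod p
  have ha0 : (((k:ℤ)+1 : ℤ) : ZMod p) ≠ 0 := by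
    push_cast
    push_cast at hk1
    exact hk1
  obtain ⟨s, hs⟩ := (legendreSym.eq_one_iff p ha0).mp hleg1
  have hs' : (k : ZMod p) + 1 = s * s := by push_cast at hs; exact hs
  have hs0 : s ≠ 0 := by
    intro h0
    rw [h0, mul_zero] at hs'
    push_cast at hk1
    exact hk1 (by linear_combination hs')
  have h40 : (4 : ZMod p) ≠ 0 := by
    intro h
    have h' : ((4:ℕ) : ZMod p) = 0 := by push_cast; exact h
    rw [ZMod.natCast_eq_zero_iff] at h'
    have hd2 : p ∣ 2 := hpf.out.dvd_of_dvd_pow (show p ∣ 2^2 by norm_num [h'])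
    exact hp2 ((Nat.prime_dvd_prime_iff_eq hpf.out Nat.prime_two).mp hd2)
  have h4s0 : (4*s : ZMod p) ≠ 0 := mul_ne_zero h40 hs0
  set r : Aring k p := δ * ι (4*s)⁻¹ with hrdef
  have hinv : ι (4*s) * ι (4*s)⁻¹ = 1 := by
    rw [← map_mul, mul_inv_cancel₀ h4s0, map_one]
  have hι4s : ι (4*s) = 4 * ι s := by
    rw [map_mul, map_ofNat]
  have h4sr : 4 * ι s * r = δ := by
    rw [hrdef, ← hι4s]
    linear_combination δ * hinv
  have hδ2 : δ^2 = ι ((16*k*(k+1) : ℕ) : ZMod p) := by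
    have h := delta_sq k p
    unfold broot at h
    rw [map_natCast, hδdef]
    linear_combination h
  have hz : ((16*k*(k+1) : ℕ) : ZMod p) * ((4*s)⁻¹)^2 = (k : ZMod p) := by
    field_simp
    push_cast
    ring_nf
    linear_combination (16*(k:ZMod p)) * hs'
  have hr2 : r^2 = (k : Aring k p) := by
    calc r^2 = δ^2 * (ι ((4*s)⁻¹))^2 := by rw [hrdef]; ring
      _ = ι (((16*k*(k+1):ℕ) : ZMod p) * ((4*s)⁻¹)^2) := by rw [hδ2, map_mul, map_pow]
      _ = ι ((k:ℕ) : ZMod p) := by rw [hz]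
      _ = ((k:ℕ) : Aring k p) := map_natCast _ _
  set β : Aring k p := ι s + r with hβdef
  have hs2 : (ι s)^2 = ((k:ℕ) : Aring k p) + 1 := by
    rw [← map_pow]
    have : (s:ZMod p)^2 = ((k:ℕ) : ZMod p) + 1 := by rw [sq]; push_cast; linear_combination hs'.symm
    rw [this, map_add, map_natCast, map_one]
  have h2β : 2 * β^2 = 2 * α := by
    have hc : ((4*k+2:ℕ) : Aring k p) = 4*((k:ℕ) : Aring k p) + 2 := by push_cast; ring
    rw [hβdef]
    linear_combination (2:Aring k p) * hs2 + 2 * hr2 + h4sr + hδdef - hc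
  have hβ2 : β^2 = α := h2u.mul_left_cancel h2β
  have hβp : β^p = ι s - r := by
    rw [hβdef, add_pow_char]
    have h1 : (ι s)^p = ι s := by rw [← map_pow, ZMod.pow_card]
    have h2 : r^p = -r := by
      rw [hrdef, mul_pow, hδp, ← map_pow, ZMod.pow_card]
      ring
    rw [h1, h2]; ring
  have hβp1 : β^(p+1) = 1 := by
    rw [pow_succ, hβp, hβdef]
    linear_combination hs2 - hr2
  have hfin : 2*((p+1)/2) = p+1 := by obtain ⟨m,hm⟩ := hodd; omega
  rw [← hβ2, ← pow_mul, hfin, hβp1]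






lemma coeffs_of_pow_eq_one (k p j : ℕ) [hpf : Fact p.Prime]
    (hpow : (aroot k p)^(j+1) = 1) :
    (p:ℤ) ∣ shallitU k (j+1) ∧ (p:ℤ) ∣ shallitU k j + 1 := by
  have hα := pow_formula k (aroot k p) (root_relation k p) j
  have h0 : ((-(shallitU k j) - 1 : ℤ) : Aring k p)
      + ((shallitU k (j+1) : ℤ) : Aring k p) * aroot k p = 0 := by
    push_cast
    push_cast at hα
    linear_combination hpow - hα
  obtain ⟨h1, h2⟩ := int_coeff_dvd k p hpf.out.one_lt _ _ h0
  refine ⟨h2, ?_⟩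
  have h1' : (p:ℤ) ∣ -(shallitU k j + 1) := by
    rwa [show -(shallitU k j) - 1 = -(shallitU k j + 1) by ring] at h1
  exact (dvd_neg).mp h1'

lemma pow_eq_one_lift (k p b j : ℕ) [hpf : Fact p.Prime] (hb : 1 ≤ b)
    (h1 : (p:ℤ) ∣ shallitU k (j+1)) (h2 : (p:ℤ) ∣ shallitU k j + 1) :
    (aroot k (p^b)) ^ ((j+1) * p^(b-1)) = 1 := by
  obtain ⟨a, ha⟩ := h1
  obtain ⟨c, hc⟩ := h2
  have hc' : shallitU k j = (p:ℤ)*c - 1 := by linarith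
  have hα := pow_formula k (aroot k (p^b)) (root_relation k (p^b)) j
  have hdiff : (aroot k (p^b))^(j+1) - 1
      = ((p:ℕ) : Aring k (p^b)) * ((a : Aring k (p^b)) * aroot k (p^b) - (c : Aring k (p^b))) := by
    rw [hα, ha, hc']
    push_cast
    ring
  have hdvd : ((p:ℕ) : Aring k (p^b)) ∣ (aroot k (p^b))^(j+1) - 1 := ⟨_, hdiff⟩
  have hlift := lift_pow p hpf.out _ hdvd (b-1)
  rw [← pow_mul, show (b-1)+1 = b by omega] at hlift
  have hzero : ((p^b : ℕ) : Aring k (p^b)) = 0 := by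
    rw [← map_natCast (AdjoinRoot.of (spoly k (p^b))), ZMod.natCast_self, map_zero]
  obtain ⟨w, hw⟩ := hlift
  rw [hzero, zero_mul] at hw
  linear_combination hw

theorem main (k : ℕ) (hk : 1 ≤ k) (p : ℕ) (hp : p.Prime)
    (hpk : ¬ p ∣ k * (k + 1)) (b : ℕ) (hb : 1 ≤ b) :
    ((2 * shallitZ k (p ^ b) : ℕ) : ℤ) ∣
        (p : ℤ) ^ (b - 1) * ((p : ℤ) - @legendreSym p ⟨hp⟩ ((k : ℤ) * ((k : ℤ) + 1))) ∧
    (p % 4 = 3 → @legendreSym p ⟨hp⟩ ((k : ℤ) + 1) = 1 →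
      @legendreSym p ⟨hp⟩ (k : ℤ) = -1 →
      4 * shallitZ k (p ^ b) ∣ p ^ (b - 1) * (p + 1)) := by
  haveI hpf : Fact p.Prime := ⟨hp⟩
  have hp2 : p ≠ 2 := by
    intro h
    exact hpk (h ▸ (even_iff_two_dvd.mp (Nat.even_mul_succ_self k)))
  have hodd : Odd p := hp.odd_of_ne_two hp2
  have hp3 : 3 ≤ p := by
    obtain ⟨m, hm⟩ := hodd
    have := hp.two_le
    omega
  have hN : 1 < p^b := Nat.one_lt_pow (by omega) hp.one_lt
  haveI : NeZero (p^b) := ⟨by positivity⟩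
  -- unit hypothesis
  have hn16 : ¬ p ∣ 16*k*(k+1) := by
    intro h
    rcases (Nat.Prime.dvd_mul hp).mp (by rwa [mul_assoc] at h) with h16 | hkk
    · have hd2 : p ∣ 2 := hp.dvd_of_dvd_pow (show p ∣ 2^4 by norm_num [h16])
      exact hp2 ((Nat.prime_dvd_prime_iff_eq hp Nat.prime_two).mp hd2)
    · exact hpk hkk
  have hu : IsUnit ((16*k*(k+1) : ℕ) : ZMod (p^b)) := by
    rw [ZMod.isUnit_iff_coprime]
    exact ((hp.coprime_iff_not_dvd.mpr hn16).symm).pow_right b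
  -- order of the root
  haveI : Finite (Aring k (p^b)) := finite_Aring k (p^b)
  set uα : (Aring k (p^b))ˣ := (root_isUnit k (p^b)).unit with huα
  set d : ℕ := orderOf uα with hd
  have hpow_iff : ∀ t : ℕ, (aroot k (p^b))^t = 1 ↔ d ∣ t := by
    intro t
    rw [hd, orderOf_dvd_iff_pow_eq_one, Units.ext_iff, Units.val_pow_eq_pow_val,
      IsUnit.unit_spec, Units.val_one]
  have hzeq : shallitZ k (p^b) = sInf {n : ℕ | 0 < n ∧ d ∣ 2*n} := by
    unfold shallitZ
    congr 1
    ext n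
    simp only [Set.mem_setOf_eq]
    constructor
    · rintro ⟨hn, hdvd⟩
      exact ⟨hn, (hpow_iff (2*n)).mp ((dvd_iff_pow k (p^b) hN hu n).mp (by exact_mod_cast hdvd))⟩
    · rintro ⟨hn, hdvd⟩
      refine ⟨hn, ?_⟩
      have := (dvd_iff_pow k (p^b) hN hu n).mpr ((hpow_iff (2*n)).mpr hdvd)
      exact_mod_cast this
  have hdiv : ∀ n : ℕ, 0 < n → d ∣ 2*n → shallitZ k (p^b) ∣ n := by
    intro n hn hdn
    rw [hzeq]
    exact sInf_dvd d n hn hdn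
  -- value of the legendre symbol
  have hkk0 : (Int.cast ((k:ℤ) * ((k:ℤ)+1)) : ZMod p) ≠ 0 := by
    intro h
    rw [show ((k:ℤ) * ((k:ℤ)+1)) = ((k*(k+1) : ℕ) : ℤ) by push_cast; ring,
      ZMod.intCast_zmod_eq_zero_iff_dvd] at h
    exact hpk (by exact_mod_cast h)
  constructor
  · -- part 1
    rcases legendreSym.eq_one_or_neg_one p hkk0 with he | he
    · -- e = 1, exponent p - 1
      rw [he]
      have hpow1 : (aroot k p)^((p-2)+1) = 1 := by
        rw [show (p-2)+1 = p-1 by omega]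
        exact (root_pow_cases k p hp2).1 he
      obtain ⟨h1, h2⟩ := coeffs_of_pow_eq_one k p (p-2) hpow1
      have hlift := pow_eq_one_lift k p b (p-2) hb h1 h2
      have hdd : d ∣ ((p-2)+1) * p^(b-1) := (hpow_iff _).mp hlift
      set n : ℕ := ((p-1)/2) * p^(b-1) with hn
      have h2n : 2*n = ((p-2)+1) * p^(b-1) := by
        rw [hn, ← mul_assoc]
        congr 1
        obtain ⟨m, hm⟩ := hodd
        omega
      have hzn : shallitZ k (p^b) ∣ n := hdiv n (Nat.mul_pos (Nat.div_pos (by omega) (by norm_num)) (pow_pos hp.pos _)) (h2n ▸ hdd)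
      have h2z : (2 * shallitZ k (p^b)) ∣ 2*n := mul_dvd_mul_left 2 hzn
      rw [h2n] at h2z
      have hcast : (p:ℤ)^(b-1) * ((p:ℤ) - 1) = ((((p-2)+1) * p^(b-1) : ℕ) : ℤ) := by
        push_cast [show (p-2)+1 = p-1 by omega]
        rw [Nat.cast_sub (by omega)]
        push_cast
        ring
      rw [hcast]
      exact_mod_cast h2z
    · -- e = -1, exponent p + 1
      rw [he]
      have hpow1 : (aroot k p)^(p+1) = 1 := (root_pow_cases k p hp2).2 he
      obtain ⟨h1, h2⟩ := coeffs_of_pow_eq_one k p p hpow1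
      have hlift := pow_eq_one_lift k p b p hb h1 h2
      have hdd : d ∣ (p+1) * p^(b-1) := (hpow_iff _).mp hlift
      set n : ℕ := ((p+1)/2) * p^(b-1) with hn
      have h2n : 2*n = (p+1) * p^(b-1) := by
        rw [hn, ← mul_assoc]
        congr 1
        obtain ⟨m, hm⟩ := hodd
        omega
      have hzn : shallitZ k (p^b) ∣ n := hdiv n (Nat.mul_pos (Nat.div_pos (by omega) (by norm_num)) (pow_pos hp.pos _)) (h2n ▸ hdd)
      have h2z : (2 * shallitZ k (p^b)) ∣ 2*n := mul_dvd_mul_left 2 hzn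
      rw [h2n] at h2z
      have hcast : (p:ℤ)^(b-1) * ((p:ℤ) - (-1)) = (((p+1) * p^(b-1) : ℕ) : ℤ) := by
        push_cast
        ring
      rw [hcast]
      exact_mod_cast h2z
  · -- part 2
    intro hp4 hleg1 hlegk
    have hk1 : ((k+1:ℕ) : ZMod p) ≠ 0 := by
      intro h
      rw [ZMod.natCast_eq_zero_iff] at h
      exact hpk (Dvd.dvd.mul_left h k)
    have hk0 : ((k:ℕ) : ZMod p) ≠ 0 := by
      intro h
      rw [ZMod.natCast_eq_zero_iff] at h
      exact hpk (Dvd.dvd.mul_right h (k+1))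
    have hhalf := root_pow_half k p hp2 hk1 hk0 hleg1 hlegk
    have hj : (p+1)/2 = ((p+1)/2 - 1) + 1 := by omega
    obtain ⟨h1, h2⟩ := coeffs_of_pow_eq_one k p ((p+1)/2 - 1) (by rw [← hj]; exact hhalf)
    have hlift := pow_eq_one_lift k p b ((p+1)/2 - 1) hb h1 h2
    have hdd : d ∣ ((p+1)/2) * p^(b-1) := by
      rw [hj]
      exact (hpow_iff _).mp hlift
    set n : ℕ := ((p+1)/4) * p^(b-1) with hn
    have h2n : 2*n = ((p+1)/2) * p^(b-1) := by
      rw [hn, ← mul_assoc]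
      congr 1
      omega
    have hzn : shallitZ k (p^b) ∣ n :=
      hdiv n (Nat.mul_pos (Nat.div_pos (by omega) (by norm_num)) (pow_pos hp.pos _)) (h2n ▸ hdd)
    have h4z : (4 * shallitZ k (p^b)) ∣ 4*n := mul_dvd_mul_left 4 hzn
    have h4n : 4*n = p^(b-1) * (p+1) := by
      rw [hn, ← mul_assoc, mul_comm _ (p^(b-1))]
      congr 1
      omega
    rwa [h4n] at h4z


end Stmt10Aux

theorem stmt10 (k : ℕ) (hk : 1 ≤ k) (p : ℕ) (hp : p.Prime)
    (hpk : ¬ p ∣ k * (k + 1)) (b : ℕ) (hb : 1 ≤ b) :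
    ((2 * shallitZ k (p ^ b) : ℕ) : ℤ) ∣
        (p : ℤ) ^ (b - 1) * ((p : ℤ) - @legendreSym p ⟨hp⟩ ((k : ℤ) * ((k : ℤ) + 1))) ∧
    (p % 4 = 3 → @legendreSym p ⟨hp⟩ ((k : ℤ) + 1) = 1 →
      @legendreSym p ⟨hp⟩ (k : ℤ) = -1 →
      4 * shallitZ k (p ^ b) ∣ p ^ (b - 1) * (p + 1)) :=
  Stmt10Aux.main k hk p hp hpk b hb
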